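/- Let ω be an infinite word over a finite alphabet whose abelian complexity function ρ^ab_ω is bounded. Then for every positive integer k, ω contains an abelian k-power as a factor. -/

import Mathlib

/-- The factor of the infinite word `ω` of length `n` starting at position `i`. -/
def factor {A : Type*} (ω : ℕ → A) (i n : ℕ) : List A :=
  (List.range n).map fun j => ω (i + j)

/-- The abelian complexity of `ω`: the number of abelian equivalence classes of
factors of `ω` of length `n`. -/
noncomputable def abelianComplexity {A : Type*} [DecidableEq A] (ω : ℕ → A) (n : ℕ) : ℕ :=
  Set.ncard {c : A → ℕ | ∃ i : ℕ, c = fun a => (factor ω i n).count a}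

lemma factor_append {A : Type*} (ω : ℕ → A) (i p q : ℕ) :
    factor ω i (p + q) = factor ω i p ++ factor ω (i + p) q := by
  unfold factor
  rw [List.range_add, List.map_append, List.map_map]
  congr 1
  ext j
  simp [Function.comp, Nat.add_assoc]

lemma count_factor_add {A : Type*} [DecidableEq A] (ω : ℕ → A) (a : A) (i p q : ℕ) :
    (factor ω i (p + q)).count a = (factor ω i p).count a + (factor ω (i + p) q).count a := by
  rw [factor_append, List.count_append]

lemma factor_length {A : Type*} (ω : ℕ → A) (i n : ℕ) : (factor ω i n).length = n := by
  simp [factor]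

lemma ivt_up (f : ℕ → ℕ) (h : ∀ t, f (t + 1) ≤ f t + 1) :
    ∀ d s c, f s ≤ c → c ≤ f (s + d) → ∃ u, f u = c := by
  intro d
  induction d with
  | zero => exact fun s c h1 h2 => ⟨s, le_antisymm h1 (by simpa using h2)⟩
  | succ d ih =>
    intro s c h1 h2
    by_cases hc : c ≤ f (s + d)
    · exact ih s c h1 hc
    · refine ⟨s + d + 1, ?_⟩
      have h3 := h (s + d)
      have h4 : c ≤ f (s + d + 1) := by rwa [Nat.add_assoc]
      omega

lemma ivt_down (f : ℕ → ℕ) (h : ∀ t, f t ≤ f (t + 1) + 1) :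
    ∀ d s c, f (s + d) ≤ c → c ≤ f s → ∃ u, f u = c := by
  intro d
  induction d with
  | zero => exact fun s c h1 h2 => ⟨s, le_antisymm (by simpa using h1) h2⟩
  | succ d ih =>
    intro s c h1 h2
    by_cases hc : f (s + d) ≤ c
    · exact ih s c hc h2
    · refine ⟨s + d + 1, ?_⟩
      have h3 := h (s + d)
      have h4 : f (s + d + 1) ≤ c := by rwa [← Nat.add_assoc] at h1
      omega

lemma count_step {A : Type*} [DecidableEq A] (ω : ℕ → A) (a : A) (n i : ℕ) :
    (factor ω (i + 1) n).count a ≤ (factor ω i n).count a + 1 ∧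
    (factor ω i n).count a ≤ (factor ω (i + 1) n).count a + 1 := by
  have h1 := count_factor_add ω a i n 1
  have h2 := count_factor_add ω a i 1 n
  rw [Nat.add_comm 1 n] at h2
  have e1 : (factor ω (i + n) 1).count a ≤ 1 := by
    simpa [factor_length] using List.count_le_length (a := a) (l := (factor ω (i + n)) 1)
  have e2 : (factor ω i 1).count a ≤ 1 := by
    simpa [factor_length] using List.count_le_length (a := a) (l := (factor ω i 1))
  omega

lemma parikh_finite {A : Type*} [Fintype A] [DecidableEq A] (ω : ℕ → A) (n : ℕ) :
    {c : A → ℕ | ∃ i : ℕ, c = fun a => (factor ω i n).count a}.Finite := by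
  apply Set.Finite.subset (Set.Finite.pi (fun _ : A => Set.finite_Iic n))
  rintro c ⟨i, rfl⟩
  intro a _
  simpa [factor_length] using List.count_le_length (a := a) (l := (factor ω i n))

lemma balance {A : Type*} [Fintype A] [DecidableEq A] (ω : ℕ → A) (M : ℕ)
    (hM : ∀ n : ℕ, abelianComplexity ω n ≤ M) (n : ℕ) (a : A) (i j : ℕ) :
    (factor ω i n).count a ≤ (factor ω j n).count a + M := by
  by_contra hcon
  push_neg at hcon
  set f : ℕ → ℕ := fun t => (factor ω t n).count a with hf
  have hfi : f i = (factor ω i n).count a := rfl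
  have hfj : f j = (factor ω j n).count a := rfl
  have hstep1 : ∀ t, f (t + 1) ≤ f t + 1 := fun t => (count_step ω a n t).1
  have hstep2 : ∀ t, f t ≤ f (t + 1) + 1 := fun t => (count_step ω a n t).2
  have hattain : ∀ m : ℕ, m ≤ M → ∃ u, f u = f j + m := by
    intro m hm
    have hle : f j ≤ f j + m := Nat.le_add_right _ _
    have hle2 : f j + m ≤ f i := by omega
    rcases le_total j i with hji | hij
    · obtain ⟨d, hd⟩ := Nat.exists_eq_add_of_le hji
      rw [hd] at hle2
      exact ivt_up f hstep1 d j (f j + m) hle hle2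
    · obtain ⟨d, hd⟩ := Nat.exists_eq_add_of_le hij
      refine ivt_down f hstep2 d i (f j + m) ?_ hle2
      rw [← hd]; omega
  choose u hu using hattain
  have hSfin := parikh_finite ω n
  have hcard : M + 1 ≤
      {c : A → ℕ | ∃ i : ℕ, c = fun a => (factor ω i n).count a}.ncard := by
    rw [Set.ncard_eq_toFinset_card _ hSfin]
    have hle := Finset.card_le_card_of_injOn
      (s := (Finset.univ : Finset (Fin (M + 1))))
      (t := hSfin.toFinset)
      (fun m : Fin (M + 1) => fun a' => (factor ω (u m.1 (Nat.lt_succ_iff.mp m.2)) n).count a')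
      (fun m _ => by
        refine (Set.Finite.mem_toFinset hSfin).mpr ?_
        exact ⟨u m.1 (Nat.lt_succ_iff.mp m.2), rfl⟩)
      (fun m1 _ m2 _ heq => by
        have h1 := congrFun heq a
        have e1 : f (u m1.1 (Nat.lt_succ_iff.mp m1.2)) = f j + m1.1 := hu _ _
        have e2 : f (u m2.1 (Nat.lt_succ_iff.mp m2.2)) = f j + m2.1 := hu _ _
        simp only [hf] at e1 e2
        simp only [e1, e2] at h1
        exact Fin.ext (by omega))
    rwa [Finset.card_univ, Fintype.card_fin] at hle
  have hM2 := hM n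
  unfold abelianComplexity at hM2
  omega

noncomputable def mA {A : Type*} [DecidableEq A] (ω : ℕ → A) (a : A) (n : ℕ) : ℕ :=
  sInf (Set.range fun i => (factor ω i n).count a)

lemma mA_le {A : Type*} [DecidableEq A] (ω : ℕ → A) (a : A) (n i : ℕ) :
    mA ω a n ≤ (factor ω i n).count a := Nat.sInf_le ⟨i, rfl⟩

lemma exists_mA {A : Type*} [DecidableEq A] (ω : ℕ → A) (a : A) (n : ℕ) :
    ∃ i, (factor ω i n).count a = mA ω a n :=
  Nat.sInf_mem (Set.range_nonempty _)

lemma count_le_mA_add {A : Type*} [Fintype A] [DecidableEq A] (ω : ℕ → A) (M : ℕ)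
    (hM : ∀ n : ℕ, abelianComplexity ω n ≤ M) (n : ℕ) (a : A) (i : ℕ) :
    (factor ω i n).count a ≤ mA ω a n + M := by
  obtain ⟨j, hj⟩ := exists_mA ω a n
  rw [← hj]
  exact balance ω M hM n a i j

lemma mA_superadd {A : Type*} [DecidableEq A] (ω : ℕ → A) (a : A) (p q : ℕ) :
    mA ω a p + mA ω a q ≤ mA ω a (p + q) := by
  obtain ⟨i, hi⟩ := exists_mA ω a (p + q)
  rw [← hi, count_factor_add]
  exact Nat.add_le_add (mA_le ω a p i) (mA_le ω a q (i + p))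

lemma mA_mul_le {A : Type*} [DecidableEq A] (ω : ℕ → A) (a : A) (p q : ℕ) :
    q * mA ω a p ≤ mA ω a (q * p) := by
  induction q with
  | zero => simp
  | succ q ih =>
    have h := mA_superadd ω a (q * p) p
    calc (q + 1) * mA ω a p = q * mA ω a p + mA ω a p := by ring
    _ ≤ mA ω a (q * p) + mA ω a p := by omega
    _ ≤ mA ω a (q * p + p) := h
    _ = mA ω a ((q + 1) * p) := by ring_nf

lemma count_blocks_le {A : Type*} [Fintype A] [DecidableEq A] (ω : ℕ → A) (M : ℕ)
    (hM : ∀ n : ℕ, abelianComplexity ω n ≤ M) (a : A) (q : ℕ) :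
    ∀ t i, (factor ω i (t * q)).count a ≤ t * (mA ω a q + M) := by
  intro t
  induction t with
  | zero => intro i; simp [factor]
  | succ t ih =>
    intro i
    have h : (t + 1) * q = t * q + q := by ring
    rw [h, count_factor_add]
    have h1 := ih i
    have h2 := count_le_mA_add ω M hM q a (i + t * q)
    have : (t + 1) * (mA ω a q + M) = t * (mA ω a q + M) + (mA ω a q + M) := by ring
    omega

lemma mA_key {A : Type*} [Fintype A] [DecidableEq A] (ω : ℕ → A) (M : ℕ)
    (hM : ∀ n : ℕ, abelianComplexity ω n ≤ M) (a : A) (p q : ℕ) :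
    q * mA ω a p ≤ p * (mA ω a q + M) := by
  have h1 := mA_mul_le ω a p q
  have h2 : mA ω a (q * p) ≤ (factor ω 0 (p * q)).count a := by
    rw [mul_comm q p]; exact mA_le ω a (p * q) 0
  have h3 := count_blocks_le ω M hM a q p 0
  omega

noncomputable def freq {A : Type*} [DecidableEq A] (ω : ℕ → A) (a : A) : ℝ :=
  sSup ((fun p : ℕ => (mA ω a p : ℝ) / p) '' {p | 0 < p})

lemma freq_bounds {A : Type*} [Fintype A] [DecidableEq A] (ω : ℕ → A) (M : ℕ)
    (hM : ∀ n : ℕ, abelianComplexity ω n ≤ M) (a : A) (n : ℕ) (hn : 0 < n) :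
    (mA ω a n : ℝ) ≤ n * freq ω a ∧ n * freq ω a ≤ mA ω a n + M := by
  have hne : ((fun p : ℕ => (mA ω a p : ℝ) / p) '' {p | 0 < p}).Nonempty :=
    ⟨_, ⟨1, by norm_num, rfl⟩⟩
  have hbdd : BddAbove ((fun p : ℕ => (mA ω a p : ℝ) / p) '' {p | 0 < p}) := by
    refine ⟨(mA ω a 1 : ℝ) + M, ?_⟩
    rintro x ⟨p, hp, rfl⟩
    have hkey := mA_key ω M hM a p 1
    have hp' : (0 : ℝ) < p := by exact_mod_cast hp
    rw [div_le_iff₀ hp']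
    have h0 : mA ω a p ≤ p * (mA ω a 1 + M) := by simpa [one_mul] using hkey
    have : (mA ω a p : ℝ) ≤ (p : ℝ) * ((mA ω a 1 : ℝ) + M) := by exact_mod_cast h0
    nlinarith
  have hn' : (0 : ℝ) < n := by exact_mod_cast hn
  constructor
  · have h1 : (mA ω a n : ℝ) / n ≤ freq ω a :=
      le_csSup hbdd ⟨n, hn, rfl⟩
    rw [div_le_iff₀ hn'] at h1
    linarith [h1]
  · have h2 : freq ω a ≤ ((mA ω a n : ℝ) + M) / n := by
      apply csSup_le hne
      rintro x ⟨p, hp, rfl⟩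
      have hp' : (0 : ℝ) < p := by exact_mod_cast hp
      rw [div_le_div_iff₀ hp' hn']
      have hkey := mA_key ω M hM a p n
      have : (n : ℝ) * (mA ω a p : ℝ) ≤ (p : ℝ) * ((mA ω a n : ℝ) + M) := by
        exact_mod_cast hkey
      nlinarith
    rw [le_div_iff₀ hn'] at h2
    linarith

lemma prefix_bound {A : Type*} [Fintype A] [DecidableEq A] (ω : ℕ → A) (M : ℕ)
    (hM : ∀ n : ℕ, abelianComplexity ω n ≤ M) (a : A) (n : ℕ) :
    |((factor ω 0 n).count a : ℝ) - n * freq ω a| ≤ M := by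
  rcases Nat.eq_zero_or_pos n with rfl | hn
  · simp [factor]
  · obtain ⟨h1, h2⟩ := freq_bounds ω M hM a n hn
    have h3 : (mA ω a n : ℝ) ≤ ((factor ω 0 n).count a : ℝ) := by
      exact_mod_cast mA_le ω a n 0
    have h4 : ((factor ω 0 n).count a : ℝ) ≤ (mA ω a n : ℝ) + M := by
      exact_mod_cast count_le_mA_add ω M hM n a 0
    rw [abs_le]
    constructor <;> linarith

noncomputable def dev {A : Type*} [DecidableEq A] (ω : ℕ → A) (a : A) (n : ℕ) : ℝ :=
  ((factor ω 0 n).count a : ℝ) - n * freq ω a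

lemma dev_bound {A : Type*} [Fintype A] [DecidableEq A] (ω : ℕ → A) (M : ℕ)
    (hM : ∀ n : ℕ, abelianComplexity ω n ≤ M) (a : A) (n : ℕ) :
    |dev ω a n| ≤ M := prefix_bound ω M hM a n

/-- The word `ω` has an abelian `k`-power with abelian period `ℓ > 0` starting at
position `i`: the `k` consecutive blocks of length `ℓ` starting at `i` are
pairwise abelian equivalent. -/
def AbelianPowerAt {A : Type*} [DecidableEq A] (ω : ℕ → A) (i k ℓ : ℕ) : Prop :=
  0 < ℓ ∧ ∀ j₁ j₂ : ℕ, j₁ < k → j₂ < k → ∀ a : A,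
    (factor ω (i + j₁ * ℓ) ℓ).count a = (factor ω (i + j₂ * ℓ) ℓ).count a

/-- Any infinite word with bounded abelian complexity contains an abelian
`k`-power for every positive integer `k`. -/
theorem abelian_power_of_bounded_abelianComplexity
    {A : Type*} [Fintype A] [DecidableEq A] (ω : ℕ → A)
    (hb : ∃ M : ℕ, ∀ n : ℕ, abelianComplexity ω n ≤ M)
    (k : ℕ) (hk : 0 < k) :
    ∃ i ℓ : ℕ, AbelianPowerAt ω i k ℓ := by
  classical
  obtain ⟨M, hM⟩ := hb
  have hfloor : ∀ (n : ℕ) (a : A),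
      ⌊2 * dev ω a n⌋ ∈ Finset.Icc (-(2 * (M : ℤ)) - 1) (2 * M) := by
    intro n a
    have h := abs_le.mp (dev_bound ω M hM a n)
    rw [Finset.mem_Icc]
    constructor
    · apply Int.le_floor.mpr
      push_cast
      linarith [h.1]
    · have h1 : (⌊2 * dev ω a n⌋ : ℝ) ≤ 2 * dev ω a n := Int.floor_le _
      have h2 : (2 * dev ω a n : ℝ) ≤ ((2 * M : ℤ) : ℝ) := by push_cast; linarith [h.2]
      exact_mod_cast h1.trans h2
  obtain ⟨ℓ, hℓ, b, c, hc⟩ := Combinatorics.exists_mono_homothetic_copy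
    (Finset.range (k + 1))
    (fun n : ℕ => fun a : A =>
      (⟨⌊2 * dev ω a n⌋, hfloor n a⟩ : {x // x ∈ Finset.Icc (-(2 * (M : ℤ)) - 1) (2 * M)}))
  refine ⟨b, ℓ, hℓ, ?_⟩
  intro j₁ j₂ hj₁ hj₂ a
  have hχ : ∀ j, j ≤ k → ⌊2 * dev ω a (b + j * ℓ)⌋ = (c a).1 := by
    intro j hj
    have h := hc j (Finset.mem_range.mpr (Nat.lt_succ_of_le hj))
    have he : ℓ • j + b = b + j * ℓ := by rw [smul_eq_mul]; ring
    rw [he] at h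
    exact congrArg (fun f => (f a).1) h
  have hdd : ∀ j j', j ≤ k → j' ≤ k →
      |dev ω a (b + j * ℓ) - dev ω a (b + j' * ℓ)| < 1 / 2 := by
    intro j j' hj hj'
    have e1 := hχ j hj
    have e2 := hχ j' hj'
    have f1 : ((c a).1 : ℝ) ≤ 2 * dev ω a (b + j * ℓ) := by
      rw [← e1]; exact Int.floor_le _
    have f2 : 2 * dev ω a (b + j * ℓ) < (c a).1 + 1 := by
      rw [← e1]; push_cast; exact Int.lt_floor_add_one _
    have f3 : ((c a).1 : ℝ) ≤ 2 * dev ω a (b + j' * ℓ) := by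
      rw [← e2]; exact Int.floor_le _
    have f4 : 2 * dev ω a (b + j' * ℓ) < (c a).1 + 1 := by
      rw [← e2]; push_cast; exact Int.lt_floor_add_one _
    rw [abs_lt]
    constructor <;> linarith
  have hblock : ∀ j : ℕ, ((factor ω (b + j * ℓ) ℓ).count a : ℝ)
      = dev ω a (b + (j + 1) * ℓ) - dev ω a (b + j * ℓ) + ℓ * freq ω a := by
    intro j
    have hsplit : (factor ω 0 (b + j * ℓ + ℓ)).count a
        = (factor ω 0 (b + j * ℓ)).count a + (factor ω (b + j * ℓ) ℓ).count a := by
      have h := count_factor_add ω a 0 (b + j * ℓ) ℓ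
      simpa using h
    have e : b + (j + 1) * ℓ = b + j * ℓ + ℓ := by ring
    simp only [dev, e, hsplit]
    push_cast
    ring
  have habs : |((factor ω (b + j₁ * ℓ) ℓ).count a : ℝ)
      - ((factor ω (b + j₂ * ℓ) ℓ).count a : ℝ)| < 1 := by
    rw [hblock j₁, hblock j₂]
    have d1 := abs_lt.mp (hdd (j₁ + 1) (j₂ + 1) (by omega) (by omega))
    have d2 := abs_lt.mp (hdd j₁ j₂ (by omega) (by omega))
    rw [abs_lt]
    constructor <;> linarith [d1.1, d1.2, d2.1, d2.2]
  have hint : ((factor ω (b + j₁ * ℓ) ℓ).count a : ℤ)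
      = ((factor ω (b + j₂ * ℓ) ℓ).count a : ℤ) := by
    have h1 : |((factor ω (b + j₁ * ℓ) ℓ).count a : ℤ)
        - ((factor ω (b + j₂ * ℓ) ℓ).count a : ℤ)| < 1 := by
      exact_mod_cast (by push_cast; exact habs :
        |(((factor ω (b + j₁ * ℓ) ℓ).count a : ℤ)
          - ((factor ω (b + j₂ * ℓ) ℓ).count a : ℤ) : ℝ)| < 1)
    exact sub_eq_zero.mp (Int.abs_lt_one_iff.mp h1)
  exact_mod_cast hint
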